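/- Let u: U → ℝ ∪ {−∞} be upper semi-continuous on a neighborhood U of z₀ = 0 in ℝᵏ × ℝˡ, depending only on the first variable t (u(t,y) = u(t)), with u(0) = 0, and let φ(z) = ⟨p,t⟩ + ⟨q,y⟩ + ⟨At,t⟩ + 2⟨Bt,y⟩ + ⟨Cy,y⟩ be a quadratic polynomial with φ(0)=0 and u(t) < φ(t,y) for all (t,y) ≠ (0,0) in U. Then q = 0, C is positive definite, and the quadratic polynomial φ̄(t) := ⟨p,t⟩ + ⟨(A − BᵀC⁻¹B)t, t⟩ satisfies u(t) ≤ φ̄(t) ≤ φ(t,y) for (t,y) near 0. -/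

import Mathlib

open Matrix

private lemma dot_symm {l : ℕ} (C : Matrix (Fin l) (Fin l) ℝ) (hC : C.IsSymm)
    (x w : Fin l → ℝ) : C.mulVec x ⬝ᵥ w = x ⬝ᵥ C.mulVec w := by
  rw [dotProduct_mulVec, ← mulVec_transpose, hC]

private lemma complete_square {k l : ℕ} (C : Matrix (Fin l) (Fin l) ℝ) (hC : C.IsSymm)
    (hCi : C * C⁻¹ = 1) (B : Matrix (Fin l) (Fin k) ℝ) (t : Fin k → ℝ) (y : Fin l → ℝ) :
    2 * (B.mulVec t ⬝ᵥ y) + y ⬝ᵥ C.mulVec y + t ⬝ᵥ (Bᵀ * C⁻¹ * B).mulVec t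
      = (y + (C⁻¹ * B).mulVec t) ⬝ᵥ C.mulVec (y + (C⁻¹ * B).mulVec t) := by
  set v := (C⁻¹ * B).mulVec t with hv
  have h1 : C.mulVec v = B.mulVec t := by
    rw [hv, mulVec_mulVec, ← Matrix.mul_assoc, hCi, Matrix.one_mul]
  have h2 : v ⬝ᵥ C.mulVec y = B.mulVec t ⬝ᵥ y := by rw [← dot_symm C hC, h1]
  have h3 : y ⬝ᵥ C.mulVec v = B.mulVec t ⬝ᵥ y := by rw [h1, dotProduct_comm]
  have h4 : v ⬝ᵥ C.mulVec v = t ⬝ᵥ (Bᵀ * C⁻¹ * B).mulVec t := by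
    rw [h1, hv, dotProduct_mulVec, ← mulVec_transpose, mulVec_mulVec,
      ← Matrix.mul_assoc, dotProduct_comm]
  rw [mulVec_add, dotProduct_add, add_dotProduct, add_dotProduct, h2, h3, h4]
  ring

/-- Lemma A.2: if `u = u(t)` is upper semi-continuous with `u(0) = 0` and the quadratic
polynomial `φ(t,y) = ⟨p,t⟩ + ⟨q,y⟩ + ⟨At,t⟩ + 2⟨Bt,y⟩ + ⟨Cy,y⟩` strictly dominates `u` off
the origin on a neighborhood `U` of `0`, then `q = 0`, `C` is positive definite, and
`φ̄(t) = ⟨p,t⟩ + ⟨(A − BᵀC⁻¹B)t,t⟩` squeezes between `u` and `φ` near `0`. -/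
theorem quadratic_radial_test_function (k l : ℕ)
    (U : Set ((Fin k → ℝ) × (Fin l → ℝ)))
    (hU : U ∈ nhds (0 : (Fin k → ℝ) × (Fin l → ℝ)))
    (u : (Fin k → ℝ) → EReal) (husc : UpperSemicontinuous u) (hu0 : u 0 = 0)
    (p : Fin k → ℝ) (q : Fin l → ℝ)
    (A : Matrix (Fin k) (Fin k) ℝ) (hA : A.IsSymm)
    (C : Matrix (Fin l) (Fin l) ℝ) (hC : C.IsSymm)
    (B : Matrix (Fin l) (Fin k) ℝ)
    (hlt : ∀ z ∈ U, z ≠ 0 →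
      u z.1 < ((p ⬝ᵥ z.1 + q ⬝ᵥ z.2 + z.1 ⬝ᵥ A.mulVec z.1 +
        2 * (B.mulVec z.1 ⬝ᵥ z.2) + z.2 ⬝ᵥ C.mulVec z.2 : ℝ) : EReal)) :
    q = 0 ∧ C.PosDef ∧
      ∀ᶠ z : (Fin k → ℝ) × (Fin l → ℝ) in nhds 0,
        u z.1 ≤ ((p ⬝ᵥ z.1 + z.1 ⬝ᵥ (A - Bᵀ * C⁻¹ * B).mulVec z.1 : ℝ) : EReal) ∧
        (p ⬝ᵥ z.1 + z.1 ⬝ᵥ (A - Bᵀ * C⁻¹ * B).mulVec z.1 : ℝ) ≤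
          p ⬝ᵥ z.1 + q ⬝ᵥ z.2 + z.1 ⬝ᵥ A.mulVec z.1 +
            2 * (B.mulVec z.1 ⬝ᵥ z.2) + z.2 ⬝ᵥ C.mulVec z.2 := by
  classical
  -- key scaling fact
  have hscale : ∀ y : Fin l → ℝ, y ≠ 0 → ∃ δ > (0:ℝ), ∀ ε : ℝ, 0 < ε → ε < δ →
      0 < ε * (q ⬝ᵥ y) + ε * (ε * (y ⬝ᵥ C.mulVec y)) := by
    intro y hy
    have hcont : Continuous (fun ε : ℝ => ((0 : Fin k → ℝ), ε • y)) := by continuity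
    have hmem : (fun ε : ℝ => ((0 : Fin k → ℝ), ε • y)) ⁻¹' U ∈ nhds (0:ℝ) := by
      apply hcont.continuousAt.preimage_mem_nhds; simpa using (show U ∈ nhds ((0 : Fin k → ℝ), (0 : Fin l → ℝ)) from hU)
    obtain ⟨δ, hδ, hball⟩ := Metric.mem_nhds_iff.mp hmem
    refine ⟨δ, hδ, fun ε hε0 hεδ => ?_⟩
    have hmemU : ((0 : Fin k → ℝ), ε • y) ∈ U := hball (by
      simp only [Metric.mem_ball, Real.dist_eq, sub_zero, abs_of_pos hε0]
      exact hεδ)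
    have hne : ((0 : Fin k → ℝ), ε • y) ≠ (0 : (Fin k → ℝ) × (Fin l → ℝ)) :=
      fun hcontra => smul_ne_zero hε0.ne' hy (congrArg Prod.snd hcontra)
    have h := hlt _ hmemU hne
    rw [hu0] at h
    simp only [dotProduct_zero, zero_dotProduct, mulVec_zero, mulVec_smul,
      dotProduct_smul, smul_dotProduct, smul_eq_mul, mul_zero, zero_add, add_zero] at h
    exact_mod_cast h
  have hq0 : ∀ y : Fin l → ℝ, 0 ≤ q ⬝ᵥ y := by
    intro y
    by_contra hneg
    push_neg at hneg
    have hy : y ≠ 0 := by rintro rfl; simp at hneg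
    obtain ⟨δ, hδ, hgood⟩ := hscale y hy
    set c := y ⬝ᵥ C.mulVec y with hc
    set ε := min (δ/2) ((-(q ⬝ᵥ y))/(2*(|c|+1))) with hε
    have hε0 : 0 < ε := lt_min (by linarith) (div_pos (by linarith) (by positivity))
    have hεδ : ε < δ := lt_of_le_of_lt (min_le_left _ _) (by linarith)
    have h := hgood ε hε0 hεδ
    have h5 : ε ≤ (-(q ⬝ᵥ y))/(2*(|c|+1)) := min_le_right _ _
    have h6 : ε * (2*(|c|+1)) ≤ -(q ⬝ᵥ y) := by
      rw [← le_div_iff₀ (by positivity)]; exact h5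
    nlinarith [le_abs_self c, abs_nonneg c, mul_pos hε0 hε0]
  have hq : q = 0 := by
    have hz : ∀ y : Fin l → ℝ, q ⬝ᵥ y = 0 := fun y => le_antisymm
      (by have := hq0 (-y); simpa [neg_nonneg] using this) (hq0 y)
    have := hz q
    exact dotProduct_self_eq_zero.mp this
  subst hq
  have hPD : C.PosDef := by
    refine posDef_iff_dotProduct_mulVec.mpr ⟨by rwa [Matrix.IsHermitian, conjTranspose_eq_transpose_of_trivial], fun y hy => ?_⟩
    obtain ⟨δ, hδ, hgood⟩ := hscale y hy
    have h := hgood (δ/2) (by linarith) (by linarith)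
    simp only [zero_dotProduct, zero_mul, zero_add] at h
    have hpos : 0 < y ⬝ᵥ C.mulVec y := by
      have hδ2 : (0:ℝ) < δ/2 := by linarith
      nlinarith [mul_pos hδ2 hδ2]
    simpa using hpos
  refine ⟨rfl, hPD, ?_⟩
  have hCi : C * C⁻¹ = 1 := mul_nonsing_inv C hPD.det_pos.ne'.isUnit
  have hnonneg : ∀ w : Fin l → ℝ, 0 ≤ w ⬝ᵥ C.mulVec w := by
    intro w
    rcases eq_or_ne w 0 with rfl | h
    · simp
    · have := hPD.dotProduct_mulVec_pos h; simpa using this.le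
  -- the second inequality holds everywhere
  have hsecond : ∀ z : (Fin k → ℝ) × (Fin l → ℝ),
      (p ⬝ᵥ z.1 + z.1 ⬝ᵥ (A - Bᵀ * C⁻¹ * B).mulVec z.1 : ℝ) ≤
        p ⬝ᵥ z.1 + (0 : Fin l → ℝ) ⬝ᵥ z.2 + z.1 ⬝ᵥ A.mulVec z.1 +
          2 * (B.mulVec z.1 ⬝ᵥ z.2) + z.2 ⬝ᵥ C.mulVec z.2 := by
    intro z
    have hk := complete_square C hC hCi B z.1 z.2
    have hn := hnonneg (z.2 + (C⁻¹ * B).mulVec z.1)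
    rw [sub_mulVec, dotProduct_sub]
    simp only [zero_dotProduct]
    linarith [hk ▸ hn]
  -- neighborhood on which the first inequality holds
  have hScont : Continuous (fun t : Fin k → ℝ =>
      ((t, -(C⁻¹ * B).mulVec t) : (Fin k → ℝ) × (Fin l → ℝ))) := by
    refine Continuous.prodMk continuous_id ?_
    exact ((C⁻¹ * B).mulVecLin.continuous_of_finiteDimensional).neg
  have hS : (fun t : Fin k → ℝ => ((t, -(C⁻¹ * B).mulVec t) :
      (Fin k → ℝ) × (Fin l → ℝ))) ⁻¹' U ∈ nhds (0 : Fin k → ℝ) := by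
    apply hScont.continuousAt.preimage_mem_nhds; simpa using (show U ∈ nhds ((0 : Fin k → ℝ), (0 : Fin l → ℝ)) from hU)
  have hfirst : ∀ t ∈ (fun t : Fin k → ℝ => ((t, -(C⁻¹ * B).mulVec t) :
      (Fin k → ℝ) × (Fin l → ℝ))) ⁻¹' U,
      u t ≤ ((p ⬝ᵥ t + t ⬝ᵥ (A - Bᵀ * C⁻¹ * B).mulVec t : ℝ) : EReal) := by
    intro t ht
    rcases eq_or_ne t 0 with rfl | htne
    · simp [hu0]
    · have hne : ((t, -(C⁻¹ * B).mulVec t) : (Fin k → ℝ) × (Fin l → ℝ)) ≠ 0 :=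
        fun hcontra => htne (congrArg Prod.fst hcontra)
      have h := hlt _ ht hne
      have hk := complete_square C hC hCi B t (-(C⁻¹ * B).mulVec t)
      simp only [neg_add_cancel] at hk
      have hzero : (0 : Fin l → ℝ) ⬝ᵥ C.mulVec 0 = 0 := by simp
      rw [hzero] at hk
      have heq : (p ⬝ᵥ t + (0 : Fin l → ℝ) ⬝ᵥ (-(C⁻¹ * B).mulVec t) + t ⬝ᵥ A.mulVec t +
          2 * (B.mulVec t ⬝ᵥ (-(C⁻¹ * B).mulVec t)) +
          (-(C⁻¹ * B).mulVec t) ⬝ᵥ C.mulVec (-(C⁻¹ * B).mulVec t) : ℝ)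
          = p ⬝ᵥ t + t ⬝ᵥ (A - Bᵀ * C⁻¹ * B).mulVec t := by
        rw [sub_mulVec, dotProduct_sub]
        simp only [zero_dotProduct]
        linarith
      calc u t ≤ _ := h.le
        _ = _ := by exact_mod_cast congrArg (fun r : ℝ => (r : EReal)) heq
  have hmem : {z : (Fin k → ℝ) × (Fin l → ℝ) | z.1 ∈ (fun t : Fin k → ℝ =>
      ((t, -(C⁻¹ * B).mulVec t) : (Fin k → ℝ) × (Fin l → ℝ))) ⁻¹' U} ∈
      nhds (0 : (Fin k → ℝ) × (Fin l → ℝ)) :=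
    continuous_fst.continuousAt.preimage_mem_nhds (by simpa using hS)
  filter_upwards [hmem] with z hz
  exact ⟨hfirst z.1 hz, hsecond z⟩
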